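/- arXiv:1901.01123 — 9 statements merged into one kernel-verified Lean document; each statement's English description precedes it below -/
import Mathlib

section
/- The pair (Θ⁰,Φ⁰) solves the traveling-wave system with unit speed: for every z<0, (Θ⁰)''(z)+(Θ⁰)'(z)+AΦ⁰(z)=0 and Le⁻¹(Φ⁰)''(z)+(Φ⁰)'(z)−AΦ⁰(z)=0, and for every z>0, (Θ⁰)''(z)+(Θ⁰)'(z)=0 and Le⁻¹(Φ⁰)''(z)+(Φ⁰)'(z)=0. -/
open Real Filter Topology

/-- The temperature component of the traveling wave. -/
noncomputable def Theta0 (θi Le : ℝ) : ℝ → ℝ := fun z =>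
  if z < 0 then 1 - (1 - θi) * Real.exp ((θi / (1 - θi)) * z)
  else θi * Real.exp (-z)

/-- The concentration component of the traveling wave. -/
noncomputable def Phi0 (θi Le : ℝ) : ℝ → ℝ := fun z =>
  if z < 0 then
    (θi / ((θi / (1 - θi) * (1 + θi / (Le * (1 - θi)))) * (1 - θi))) *
      Real.exp ((θi / (1 - θi)) * z)
  else
    1 + (θi / ((θi / (1 - θi) * (1 + θi / (Le * (1 - θi)))) * (1 - θi)) - 1) *
      Real.exp (-Le * z)

lemma hasDerivAt_exp_mul' (c z : ℝ) :
    HasDerivAt (fun y => Real.exp (c * y)) (c * Real.exp (c * z)) z := by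
  simpa [mul_comm, Function.comp_def] using (Real.hasDerivAt_exp (c * z)).comp z ((hasDerivAt_id z).const_mul c)

lemma deriv_aux (c b d : ℝ) :
    deriv (fun y => c * Real.exp (b * y) + d) = fun z => (c * b) * Real.exp (b * z) :=
  funext fun z => by
    simpa [mul_assoc, mul_comm, mul_left_comm] using
      (((hasDerivAt_exp_mul' b z).const_mul c).add_const d).deriv

lemma deriv_aux2 (c b : ℝ) :
    deriv (fun y => c * Real.exp (b * y)) = fun z => (c * b) * Real.exp (b * z) :=
  funext fun z => by
    simpa [mul_assoc, mul_comm, mul_left_comm] using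
      ((hasDerivAt_exp_mul' b z).const_mul c).deriv

/-- the pair (Θ⁰,Φ⁰) solves the traveling-wave system with unit
speed, with A = (Θᵢ/(1−Θᵢ))(1+Θᵢ/(Le(1−Θᵢ))). -/
theorem traveling_wave_solves_system (θi Le : ℝ) (hθ : θi ∈ Set.Ioo (0:ℝ) 1) (hLe : 1 < Le) :
    (∀ z < (0:ℝ),
      deriv (deriv (Theta0 θi Le)) z + deriv (Theta0 θi Le) z +
        (θi / (1 - θi) * (1 + θi / (Le * (1 - θi)))) * Phi0 θi Le z = 0 ∧
      Le⁻¹ * deriv (deriv (Phi0 θi Le)) z + deriv (Phi0 θi Le) z -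
        (θi / (1 - θi) * (1 + θi / (Le * (1 - θi)))) * Phi0 θi Le z = 0) ∧
    (∀ z > (0:ℝ),
      deriv (deriv (Theta0 θi Le)) z + deriv (Theta0 θi Le) z = 0 ∧
      Le⁻¹ * deriv (deriv (Phi0 θi Le)) z + deriv (Phi0 θi Le) z = 0) := by
  obtain ⟨hθ0, hθ1⟩ := hθ
  have h1θ : (0:ℝ) < 1 - θi := by linarith
  have hLe0 : (0:ℝ) < Le := by linarith
  have hA : (0:ℝ) < θi / (1 - θi) * (1 + θi / (Le * (1 - θi))) := by positivity
  constructor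
  · intro z hz
    -- eventual equalities on Iio 0
    have hT : Theta0 θi Le =ᶠ[𝓝 z]
        fun y => (-(1 - θi)) * Real.exp ((θi / (1 - θi)) * y) + 1 := by
      filter_upwards [Iio_mem_nhds hz] with x hx
      simp only [Theta0, if_pos (Set.mem_Iio.mp hx)]; ring
    have hP : Phi0 θi Le =ᶠ[𝓝 z]
        fun y => (θi / ((θi / (1 - θi) * (1 + θi / (Le * (1 - θi)))) * (1 - θi))) *
          Real.exp ((θi / (1 - θi)) * y) + 0 := by
      filter_upwards [Iio_mem_nhds hz] with x hx
      simp only [Phi0, if_pos (Set.mem_Iio.mp hx)]; ring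
    have hT1 : deriv (Theta0 θi Le) z
        = (-(1 - θi)) * (θi / (1 - θi)) * Real.exp ((θi / (1 - θi)) * z) := by
      rw [hT.deriv_eq, deriv_aux]
    have hT2 : deriv (deriv (Theta0 θi Le)) z
        = (-(1 - θi)) * (θi / (1 - θi)) * (θi / (1 - θi)) *
            Real.exp ((θi / (1 - θi)) * z) := by
      rw [hT.deriv.deriv_eq, deriv_aux, deriv_aux2]
    have hP1 : deriv (Phi0 θi Le) z
        = (θi / ((θi / (1 - θi) * (1 + θi / (Le * (1 - θi)))) * (1 - θi))) *
            (θi / (1 - θi)) * Real.exp ((θi / (1 - θi)) * z) := by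
      rw [hP.deriv_eq, deriv_aux]
    have hP2 : deriv (deriv (Phi0 θi Le)) z
        = (θi / ((θi / (1 - θi) * (1 + θi / (Le * (1 - θi)))) * (1 - θi))) *
            (θi / (1 - θi)) * (θi / (1 - θi)) * Real.exp ((θi / (1 - θi)) * z) := by
      rw [hP.deriv.deriv_eq, deriv_aux, deriv_aux2]
    have hPz : Phi0 θi Le z
        = (θi / ((θi / (1 - θi) * (1 + θi / (Le * (1 - θi)))) * (1 - θi))) *
            Real.exp ((θi / (1 - θi)) * z) := by
      simp only [Phi0, if_pos hz]
    rw [hT1, hT2, hP1, hP2, hPz]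
    constructor
    · field_simp
      ring
    · field_simp
      ring
  · intro z hz
    have hT : Theta0 θi Le =ᶠ[𝓝 z] fun y => θi * Real.exp ((-1) * y) + 0 := by
      filter_upwards [Ioi_mem_nhds hz] with x hx
      simp only [Theta0, if_neg (not_lt.mpr (le_of_lt (Set.mem_Ioi.mp hx)))]
      ring_nf
    have hP : Phi0 θi Le =ᶠ[𝓝 z]
        fun y => (θi / ((θi / (1 - θi) * (1 + θi / (Le * (1 - θi)))) * (1 - θi)) - 1) *
          Real.exp ((-Le) * y) + 1 := by
      filter_upwards [Ioi_mem_nhds hz] with x hx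
      simp only [Phi0, if_neg (not_lt.mpr (le_of_lt (Set.mem_Ioi.mp hx)))]
      ring
    have hT1 : deriv (Theta0 θi Le) z = θi * (-1) * Real.exp ((-1) * z) := by
      rw [hT.deriv_eq, deriv_aux]
    have hT2 : deriv (deriv (Theta0 θi Le)) z = θi * (-1) * (-1) * Real.exp ((-1) * z) := by
      rw [hT.deriv.deriv_eq, deriv_aux, deriv_aux2]
    have hP1 : deriv (Phi0 θi Le) z
        = (θi / ((θi / (1 - θi) * (1 + θi / (Le * (1 - θi)))) * (1 - θi)) - 1) *
            (-Le) * Real.exp ((-Le) * z) := by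
      rw [hP.deriv_eq, deriv_aux]
    have hP2 : deriv (deriv (Phi0 θi Le)) z
        = (θi / ((θi / (1 - θi) * (1 + θi / (Le * (1 - θi)))) * (1 - θi)) - 1) *
            (-Le) * (-Le) * Real.exp ((-Le) * z) := by
      rw [hP.deriv.deriv_eq, deriv_aux, deriv_aux2]
    rw [hT1, hT2, hP1, hP2]
    constructor
    · ring
    · field_simp
      ring
end

section
/- The pair (u,v)=((Θ⁰)',(Φ⁰)') is an eigenfunction of the linearized operator with eigenvalue 0: u and v are continuous at 0; u''+u'+Av=0 and Le⁻¹v''+v'−Av=0 on (−∞,0); u''+u'=0 and Le⁻¹v''+v'=0 on (0,∞); the transmission conditions u'(0⁺)−u'(0⁻) = −u(0)/(1−Θᵢ) and v'(0⁺)−v'(0⁻) = Le·u(0)/(1−Θᵢ) hold; and the weighted suprema sup_{ξ<0} e^{ξ/2}|u(ξ)|, sup_{ξ>0} e^{ξ/2}|u(ξ)|, sup_{ξ<0} e^{ξ/2}|v(ξ)| and sup_{ξ>0} e^{Le·ξ/2}|v(ξ)| are all finite. -/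
open Real Filter Topology

/-- Auxiliary: affine-exponential functions. -/
noncomputable def expAux (a b k : ℝ) : ℝ → ℝ := fun z => a + b * Real.exp (k * z)

lemma continuous_expAux (a b k : ℝ) : Continuous (expAux a b k) := by
  unfold expAux; continuity

lemma hasDerivAt_expAux (a b k x : ℝ) :
    HasDerivAt (expAux a b k) (b * k * Real.exp (k * x)) x := by
  have h : HasDerivAt (fun z : ℝ => k * z) k x := by
    simpa using (hasDerivAt_id x).const_mul k
  have h2 := ((Real.hasDerivAt_exp (k*x)).comp x h).const_mul b
  have h3 := h2.const_add a
  refine h3.congr_deriv ?_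
  ring

lemma deriv_expAux (a b k : ℝ) : deriv (expAux a b k) = expAux 0 (b*k) k := by
  funext x
  rw [(hasDerivAt_expAux a b k x).deriv]
  simp [expAux, mul_comm]

lemma eqOn_deriv' {f g : ℝ → ℝ} {s : Set ℝ} (hs : IsOpen s) (h : Set.EqOn f g s) :
    Set.EqOn (deriv f) (deriv g) s := fun x hx =>
  Filter.EventuallyEq.deriv_eq (Filter.eventually_of_mem (hs.mem_nhds hx) h)

lemma eqOn_deriv_expAux {f : ℝ → ℝ} {s : Set ℝ} (hs : IsOpen s) {a b k : ℝ}
    (h : Set.EqOn f (expAux a b k) s) : Set.EqOn (deriv f) (expAux 0 (b*k) k) s := by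
  have := eqOn_deriv' hs h
  rwa [deriv_expAux] at this

lemma weight_bound' {e1 e2 : ℝ} (b : ℝ) (h : e1 + e2 ≤ 0) :
    Real.exp e1 * |b * Real.exp e2| ≤ |b| := by
  rw [abs_mul, Real.abs_exp]
  calc Real.exp e1 * (|b| * Real.exp e2) = |b| * Real.exp (e1 + e2) := by
        rw [Real.exp_add]; ring
    _ ≤ |b| * 1 := by
        have := Real.exp_le_one_iff.mpr h
        nlinarith [abs_nonneg b]
    _ = |b| := mul_one _

lemma tendsto_of_eqOn_expAux {f : ℝ → ℝ} {s : Set ℝ} {b k : ℝ}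
    (h : Set.EqOn f (expAux 0 b k) s) : Filter.Tendsto f (𝓝[s] 0) (𝓝 b) := by
  have hc : Filter.Tendsto (expAux 0 b k) (𝓝[s] (0:ℝ)) (𝓝 (expAux 0 b k 0)) :=
    (continuous_expAux 0 b k).continuousAt.continuousWithinAt
  have hv : expAux 0 b k 0 = b := by simp [expAux]
  rw [hv] at hc
  exact hc.congr' (Filter.eventuallyEq_of_mem self_mem_nhdsWithin fun x hx => (h hx).symm)

set_option maxHeartbeats 2000000 in
/-- the pair (u,v)=((Θ⁰)',(Φ⁰)') is an eigenfunction of the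
linearized operator with eigenvalue 0: continuity at 0, the ODEs on (−∞,0) and
(0,∞) with A = (Θᵢ/(1−Θᵢ))(1+Θᵢ/(Le(1−Θᵢ))), the transmission conditions at 0,
and finiteness of the four weighted suprema. -/
theorem derivative_of_wave_is_eigenfunction (θi Le : ℝ)
    (hθ : θi ∈ Set.Ioo (0:ℝ) 1) (hLe : 1 < Le) :
    ContinuousAt (deriv (Theta0 θi Le)) 0 ∧
    ContinuousAt (deriv (Phi0 θi Le)) 0 ∧
    (∀ ξ < (0:ℝ),
      deriv (deriv (deriv (Theta0 θi Le))) ξ + deriv (deriv (Theta0 θi Le)) ξ +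
        (θi / (1 - θi) * (1 + θi / (Le * (1 - θi)))) * deriv (Phi0 θi Le) ξ = 0 ∧
      Le⁻¹ * deriv (deriv (deriv (Phi0 θi Le))) ξ + deriv (deriv (Phi0 θi Le)) ξ -
        (θi / (1 - θi) * (1 + θi / (Le * (1 - θi)))) * deriv (Phi0 θi Le) ξ = 0) ∧
    (∀ ξ > (0:ℝ),
      deriv (deriv (deriv (Theta0 θi Le))) ξ + deriv (deriv (Theta0 θi Le)) ξ = 0 ∧
      Le⁻¹ * deriv (deriv (deriv (Phi0 θi Le))) ξ + deriv (deriv (Phi0 θi Le)) ξ = 0) ∧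
    (∃ up um : ℝ,
      Tendsto (deriv (deriv (Theta0 θi Le))) (𝓝[>] 0) (𝓝 up) ∧
      Tendsto (deriv (deriv (Theta0 θi Le))) (𝓝[<] 0) (𝓝 um) ∧
      up - um = -(deriv (Theta0 θi Le) 0) / (1 - θi)) ∧
    (∃ vp vm : ℝ,
      Tendsto (deriv (deriv (Phi0 θi Le))) (𝓝[>] 0) (𝓝 vp) ∧
      Tendsto (deriv (deriv (Phi0 θi Le))) (𝓝[<] 0) (𝓝 vm) ∧
      vp - vm = Le * deriv (Theta0 θi Le) 0 / (1 - θi)) ∧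
    (∃ C : ℝ, ∀ ξ < (0:ℝ), Real.exp (ξ / 2) * |deriv (Theta0 θi Le) ξ| ≤ C) ∧
    (∃ C : ℝ, ∀ ξ > (0:ℝ), Real.exp (ξ / 2) * |deriv (Theta0 θi Le) ξ| ≤ C) ∧
    (∃ C : ℝ, ∀ ξ < (0:ℝ), Real.exp (ξ / 2) * |deriv (Phi0 θi Le) ξ| ≤ C) ∧
    (∃ C : ℝ, ∀ ξ > (0:ℝ), Real.exp (Le * ξ / 2) * |deriv (Phi0 θi Le) ξ| ≤ C) := by
  obtain ⟨hθ0, hθ1⟩ := hθ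
  have h1 : (0:ℝ) < 1 - θi := by linarith
  have hLe0 : (0:ℝ) < Le := by linarith
  have hm : (0:ℝ) < θi / (1 - θi) := div_pos hθ0 h1
  have hA : (0:ℝ) < θi / (1 - θi) * (1 + θi / (Le * (1 - θi))) := by
    apply mul_pos hm
    have : (0:ℝ) < θi / (Le * (1 - θi)) := div_pos hθ0 (mul_pos hLe0 h1)
    linarith
  have h1' : (1:ℝ) - θi ≠ 0 := ne_of_gt h1
  have hLe' : Le ≠ 0 := ne_of_gt hLe0
  have hA' : θi / (1 - θi) * (1 + θi / (Le * (1 - θi))) ≠ 0 := ne_of_gt hA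
  -- EqOn facts on closed half lines
  have hTN : Set.EqOn (Theta0 θi Le) (expAux 1 (-(1-θi)) (θi/(1-θi))) (Set.Iic 0) := by
    intro x hx
    rcases lt_or_eq_of_le (Set.mem_Iic.mp hx) with hx' | hx'
    · simp only [Theta0, expAux, if_pos hx']; ring
    · subst hx'; simp [Theta0, expAux]
  have hTP : Set.EqOn (Theta0 θi Le) (expAux 0 θi (-1)) (Set.Ici 0) := by
    intro x hx
    simp only [Theta0, expAux, if_neg (not_lt.mpr (Set.mem_Ici.mp hx))]
    ring_nf
  have hPN : Set.EqOn (Phi0 θi Le)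
      (expAux 0 (θi / ((θi / (1 - θi) * (1 + θi / (Le * (1 - θi)))) * (1 - θi))) (θi/(1-θi)))
      (Set.Iic 0) := by
    intro x hx
    rcases lt_or_eq_of_le (Set.mem_Iic.mp hx) with hx' | hx'
    · simp only [Phi0, expAux, if_pos hx']; ring
    · subst hx'
      simp only [Phi0, expAux, if_neg (lt_irrefl (0:ℝ)), mul_zero, Real.exp_zero]
      have : θi / (1 - θi) * (1 + θi / (Le * (1 - θi))) * (1 - θi) ≠ 0 := by positivity
      field_simp
      ring
  have hPP : Set.EqOn (Phi0 θi Le)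
      (expAux 1 (θi / ((θi / (1 - θi) * (1 + θi / (Le * (1 - θi)))) * (1 - θi)) - 1) (-Le))
      (Set.Ici 0) := by
    intro x hx
    simp only [Phi0, expAux, if_neg (not_lt.mpr (Set.mem_Ici.mp hx))]
  -- derivative chains on open half lines
  have dT1 := eqOn_deriv_expAux isOpen_Iio (hTN.mono Set.Iio_subset_Iic_self)
  have dT2 := eqOn_deriv_expAux isOpen_Iio dT1
  have dT3 := eqOn_deriv_expAux isOpen_Iio dT2
  have dTP1 := eqOn_deriv_expAux isOpen_Ioi (hTP.mono Set.Ioi_subset_Ici_self)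
  have dTP2 := eqOn_deriv_expAux isOpen_Ioi dTP1
  have dTP3 := eqOn_deriv_expAux isOpen_Ioi dTP2
  have dP1 := eqOn_deriv_expAux isOpen_Iio (hPN.mono Set.Iio_subset_Iic_self)
  have dP2 := eqOn_deriv_expAux isOpen_Iio dP1
  have dP3 := eqOn_deriv_expAux isOpen_Iio dP2
  have dPP1 := eqOn_deriv_expAux isOpen_Ioi (hPP.mono Set.Ioi_subset_Ici_self)
  have dPP2 := eqOn_deriv_expAux isOpen_Ioi dPP1
  have dPP3 := eqOn_deriv_expAux isOpen_Ioi dPP2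
  -- derivative of Theta0 at 0
  have hdT : HasDerivAt (Theta0 θi Le) (-θi) 0 := by
    have hL : HasDerivWithinAt (Theta0 θi Le) (-θi) (Set.Iic 0) 0 := by
      have h := (hasDerivAt_expAux 1 (-(1-θi)) (θi/(1-θi)) 0).hasDerivWithinAt (s := Set.Iic 0)
      have h' := h.congr hTN (hTN (Set.mem_Iic.mpr le_rfl))
      refine h'.congr_deriv ?_
      symm
      rw [mul_zero, Real.exp_zero]
      field_simp
    have hR : HasDerivWithinAt (Theta0 θi Le) (-θi) (Set.Ici 0) 0 := by
      have h := (hasDerivAt_expAux 0 θi (-1) 0).hasDerivWithinAt (s := Set.Ici 0)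
      have h' := h.congr hTP (hTP (Set.mem_Ici.mpr le_rfl))
      refine h'.congr_deriv ?_
      symm
      rw [mul_zero, Real.exp_zero]
      ring
    have h := hL.union hR
    rw [Set.Iic_union_Ici] at h
    exact hasDerivWithinAt_univ.mp h
  -- derivative of Phi0 at 0
  have hkey : (θi / ((θi / (1 - θi) * (1 + θi / (Le * (1 - θi)))) * (1 - θi)) - 1) * (-Le)
      = (θi / ((θi / (1 - θi) * (1 + θi / (Le * (1 - θi)))) * (1 - θi))) * (θi/(1-θi)) := by
    field_simp
    ring
  have hdP : HasDerivAt (Phi0 θi Le)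
      ((θi / ((θi / (1 - θi) * (1 + θi / (Le * (1 - θi)))) * (1 - θi))) * (θi/(1-θi))) 0 := by
    have hL : HasDerivWithinAt (Phi0 θi Le) _ (Set.Iic 0) 0 :=
      ((hasDerivAt_expAux 0 (θi / ((θi / (1 - θi) * (1 + θi / (Le * (1 - θi)))) * (1 - θi)))
        (θi/(1-θi)) 0).hasDerivWithinAt (s := Set.Iic 0)).congr hPN (hPN (Set.mem_Iic.mpr le_rfl))
    have hL' : HasDerivWithinAt (Phi0 θi Le)
        ((θi / ((θi / (1 - θi) * (1 + θi / (Le * (1 - θi)))) * (1 - θi))) * (θi/(1-θi)))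
        (Set.Iic 0) 0 := by
      convert hL using 1
      rw [mul_zero, Real.exp_zero, mul_one]
    have hR : HasDerivWithinAt (Phi0 θi Le) _ (Set.Ici 0) 0 :=
      ((hasDerivAt_expAux 1 (θi / ((θi / (1 - θi) * (1 + θi / (Le * (1 - θi)))) * (1 - θi)) - 1)
        (-Le) 0).hasDerivWithinAt (s := Set.Ici 0)).congr hPP (hPP (Set.mem_Ici.mpr le_rfl))
    have hR' : HasDerivWithinAt (Phi0 θi Le)
        ((θi / ((θi / (1 - θi) * (1 + θi / (Le * (1 - θi)))) * (1 - θi))) * (θi/(1-θi)))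
        (Set.Ici 0) 0 := by
      convert hR using 1
      rw [mul_zero, Real.exp_zero, mul_one, hkey]
    have h := hL'.union hR'
    rw [Set.Iic_union_Ici] at h
    exact hasDerivWithinAt_univ.mp h
  -- extend deriv EqOn to closed half lines
  have dT1' : Set.EqOn (deriv (Theta0 θi Le))
      (expAux 0 ((-(1-θi))*(θi/(1-θi))) (θi/(1-θi))) (Set.Iic 0) := by
    intro x hx
    rcases lt_or_eq_of_le (Set.mem_Iic.mp hx) with hx' | hx'
    · exact dT1 hx'
    · subst hx'
      rw [hdT.deriv]
      simp only [expAux, mul_zero, Real.exp_zero, mul_one, zero_add]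
      field_simp
  have dTP1' : Set.EqOn (deriv (Theta0 θi Le)) (expAux 0 (θi*(-1)) (-1)) (Set.Ici 0) := by
    intro x hx
    rcases eq_or_lt_of_le (Set.mem_Ici.mp hx) with hx' | hx'
    · subst hx'
      rw [hdT.deriv]
      simp only [expAux, mul_zero, Real.exp_zero, mul_one, zero_add]
      ring
    · exact dTP1 hx'
  have dP1' : Set.EqOn (deriv (Phi0 θi Le))
      (expAux 0 ((θi / ((θi / (1 - θi) * (1 + θi / (Le * (1 - θi)))) * (1 - θi)))*(θi/(1-θi)))
        (θi/(1-θi))) (Set.Iic 0) := by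
    intro x hx
    rcases lt_or_eq_of_le (Set.mem_Iic.mp hx) with hx' | hx'
    · exact dP1 hx'
    · subst hx'
      rw [hdP.deriv]
      simp only [expAux, mul_zero, Real.exp_zero, mul_one, zero_add]
  have dPP1' : Set.EqOn (deriv (Phi0 θi Le))
      (expAux 0 ((θi / ((θi / (1 - θi) * (1 + θi / (Le * (1 - θi)))) * (1 - θi)) - 1)*(-Le))
        (-Le)) (Set.Ici 0) := by
    intro x hx
    rcases eq_or_lt_of_le (Set.mem_Ici.mp hx) with hx' | hx'
    · subst hx'
      rw [hdP.deriv]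
      simp only [expAux, mul_zero, Real.exp_zero, mul_one, zero_add]
      rw [hkey]
    · exact dPP1 hx'
  -- continuity of the derivatives at 0
  have contT : ContinuousAt (deriv (Theta0 θi Le)) 0 := by
    have cwL := ((continuous_expAux 0 ((-(1-θi))*(θi/(1-θi))) (θi/(1-θi))).continuousAt
      (x := (0:ℝ))).continuousWithinAt.congr dT1' (dT1' (Set.mem_Iic.mpr le_rfl))
    have cwR := ((continuous_expAux 0 (θi*(-1)) (-1)).continuousAt
      (x := (0:ℝ))).continuousWithinAt.congr dTP1' (dTP1' (Set.mem_Ici.mpr le_rfl))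
    have h := cwL.union cwR
    rw [Set.Iic_union_Ici] at h
    exact continuousWithinAt_univ _ _ |>.mp h
  have contP : ContinuousAt (deriv (Phi0 θi Le)) 0 := by
    have cwL := ((continuous_expAux 0
      ((θi / ((θi / (1 - θi) * (1 + θi / (Le * (1 - θi)))) * (1 - θi)))*(θi/(1-θi)))
      (θi/(1-θi))).continuousAt (x := (0:ℝ))).continuousWithinAt.congr dP1'
      (dP1' (Set.mem_Iic.mpr le_rfl))
    have cwR := ((continuous_expAux 0
      ((θi / ((θi / (1 - θi) * (1 + θi / (Le * (1 - θi)))) * (1 - θi)) - 1)*(-Le))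
      (-Le)).continuousAt (x := (0:ℝ))).continuousWithinAt.congr dPP1'
      (dPP1' (Set.mem_Ici.mpr le_rfl))
    have h := cwL.union cwR
    rw [Set.Iic_union_Ici] at h
    exact continuousWithinAt_univ _ _ |>.mp h
  refine ⟨contT, contP, ?_, ?_, ?_, ?_, ?_, ?_, ?_, ?_⟩
  · -- ODEs on the negative half line
    intro ξ hξ
    have hξ' : ξ ∈ Set.Iio (0:ℝ) := Set.mem_Iio.mpr hξ
    constructor
    · rw [dT3 hξ', dT2 hξ', dP1 hξ']
      simp only [expAux, zero_add]
      have hco : (-(1-θi))*(θi/(1-θi))*(θi/(1-θi))*(θi/(1-θi))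
          + (-(1-θi))*(θi/(1-θi))*(θi/(1-θi))
          + (θi / (1 - θi) * (1 + θi / (Le * (1 - θi)))) *
            ((θi / ((θi / (1 - θi) * (1 + θi / (Le * (1 - θi)))) * (1 - θi)))*(θi/(1-θi)))
          = 0 := by
        field_simp
        ring
      linear_combination Real.exp ((θi/(1-θi))*ξ) * hco
    · rw [dP3 hξ', dP2 hξ', dP1 hξ']
      simp only [expAux, zero_add]
      have hco : Le⁻¹ * ((θi / ((θi / (1 - θi) * (1 + θi / (Le * (1 - θi)))) * (1 - θi)))
            *(θi/(1-θi))*(θi/(1-θi))*(θi/(1-θi)))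
          + (θi / ((θi / (1 - θi) * (1 + θi / (Le * (1 - θi)))) * (1 - θi)))
            *(θi/(1-θi))*(θi/(1-θi))
          - (θi / (1 - θi) * (1 + θi / (Le * (1 - θi)))) *
            ((θi / ((θi / (1 - θi) * (1 + θi / (Le * (1 - θi)))) * (1 - θi)))*(θi/(1-θi)))
          = 0 := by
        field_simp
        ring
      linear_combination Real.exp ((θi/(1-θi))*ξ) * hco
  · -- ODEs on the positive half line
    intro ξ hξ
    have hξ' : ξ ∈ Set.Ioi (0:ℝ) := Set.mem_Ioi.mpr hξ
    constructor
    · rw [dTP3 hξ', dTP2 hξ']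
      simp only [expAux, zero_add]
      ring
    · rw [dPP3 hξ', dPP2 hξ']
      simp only [expAux, zero_add]
      have hco : Le⁻¹ * ((θi / ((θi / (1 - θi) * (1 + θi / (Le * (1 - θi)))) * (1 - θi)) - 1)
            *(-Le)*(-Le)*(-Le))
          + (θi / ((θi / (1 - θi) * (1 + θi / (Le * (1 - θi)))) * (1 - θi)) - 1)*(-Le)*(-Le)
          = 0 := by
        field_simp
        ring
      linear_combination Real.exp ((-Le)*ξ) * hco
  · -- transmission for u
    refine ⟨θi*(-1)*(-1), (-(1-θi))*(θi/(1-θi))*(θi/(1-θi)), ?_, ?_, ?_⟩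
    · exact tendsto_of_eqOn_expAux dTP2
    · exact tendsto_of_eqOn_expAux dT2
    · rw [hdT.deriv]
      field_simp
      ring
  · -- transmission for v
    refine ⟨(θi / ((θi / (1 - θi) * (1 + θi / (Le * (1 - θi)))) * (1 - θi)) - 1)*(-Le)*(-Le),
      (θi / ((θi / (1 - θi) * (1 + θi / (Le * (1 - θi)))) * (1 - θi)))*(θi/(1-θi))*(θi/(1-θi)),
      ?_, ?_, ?_⟩
    · exact tendsto_of_eqOn_expAux dPP2
    · exact tendsto_of_eqOn_expAux dP2
    · rw [hdT.deriv]
      field_simp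
      ring
  · -- weighted bound 1
    refine ⟨|(-(1-θi))*(θi/(1-θi))|, fun ξ hξ => ?_⟩
    rw [dT1 (Set.mem_Iio.mpr hξ)]
    simp only [expAux, zero_add]
    apply weight_bound'
    have : (θi/(1-θi))*ξ ≤ 0 := le_of_lt (mul_neg_of_pos_of_neg hm hξ)
    linarith
  · -- weighted bound 2
    refine ⟨|θi*(-1)|, fun ξ hξ => ?_⟩
    rw [dTP1 (Set.mem_Ioi.mpr hξ)]
    simp only [expAux, zero_add]
    apply weight_bound'
    linarith
  · -- weighted bound 3
    refine ⟨|(θi / ((θi / (1 - θi) * (1 + θi / (Le * (1 - θi)))) * (1 - θi)))*(θi/(1-θi))|,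
      fun ξ hξ => ?_⟩
    rw [dP1 (Set.mem_Iio.mpr hξ)]
    simp only [expAux, zero_add]
    apply weight_bound'
    have : (θi/(1-θi))*ξ ≤ 0 := le_of_lt (mul_neg_of_pos_of_neg hm hξ)
    linarith
  · -- weighted bound 4
    refine ⟨|(θi / ((θi / (1 - θi) * (1 + θi / (Le * (1 - θi)))) * (1 - θi)) - 1)*(-Le)|,
      fun ξ hξ => ?_⟩
    rw [dPP1 (Set.mem_Ioi.mpr hξ)]
    simp only [expAux, zero_add]
    apply weight_bound'
    have : 0 < Le * ξ := mul_pos hLe0 hξ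
    linarith
end

section
/- Let Le>1 and A>0, and set λ*₊ = (−A·Le + i√(A·Le(Le−1)))/(Le−1) and λ*₋ = (−A·Le − i√(A·Le(Le−1)))/(Le−1). Then: (i) λ*₊ and λ*₋ are exactly the two roots of the quadratic (Le−1)²λ² + 2(Le−1)·Le·A·λ + Le·A·(Le·A+Le−1) = 0; (ii) both satisfy k₁(λ)=k₃(λ), i.e. √(Le²+4Le(A+λ*₊)) = √(1+4λ*₊) + Le − 1 and likewise for λ*₋ (with principal complex square roots); (iii) Re λ*₊ = Re λ*₋ = −A·Le/(Le−1) < 0. -/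
open Complex

/-- Principal branch of the complex square root. -/
noncomputable def csqrt (z : ℂ) : ℂ := z ^ (1/2 : ℂ)

lemma csqrt_sq {c : ℂ} (hc : 0 < c.re) : csqrt (c ^ 2) = c := by
  have := Complex.sq_cpow_two_inv hc
  simpa [csqrt, one_div] using this

/-- the two complex numbers λ*₊, λ*₋ are exactly the roots of the
quadratic (Le−1)²λ² + 2(Le−1)LeAλ + LeA(LeA+Le−1) = 0, they satisfy
k₁(λ)=k₃(λ), i.e. √(Le²+4Le(A+λ)) = √(1+4λ) + Le − 1, and their common real
part −A·Le/(Le−1) is negative. -/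
theorem roots_k1_eq_k3 (Le A : ℝ) (hLe : 1 < Le) (hA : 0 < A) :
    (fun lp lm : ℂ =>
      lp ≠ lm ∧
      (∀ l : ℂ,
        ((Le : ℂ) - 1) ^ 2 * l ^ 2 + 2 * ((Le : ℂ) - 1) * Le * A * l +
          (Le : ℂ) * A * ((Le : ℂ) * A + Le - 1) = 0 ↔ l = lp ∨ l = lm) ∧
      csqrt ((Le : ℂ) ^ 2 + 4 * Le * ((A : ℂ) + lp)) = csqrt (1 + 4 * lp) + Le - 1 ∧
      csqrt ((Le : ℂ) ^ 2 + 4 * Le * ((A : ℂ) + lm)) = csqrt (1 + 4 * lm) + Le - 1 ∧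
      lp.re = -(A * Le) / (Le - 1) ∧
      lm.re = -(A * Le) / (Le - 1) ∧
      -(A * Le) / (Le - 1) < 0)
    ((-(A * Le) + Complex.I * Real.sqrt (A * Le * (Le - 1))) / ((Le : ℂ) - 1))
    ((-(A * Le) - Complex.I * Real.sqrt (A * Le * (Le - 1))) / ((Le : ℂ) - 1)) := by
  have hLe0 : (0 : ℝ) < Le - 1 := by linarith
  have hpos : 0 < A * Le * (Le - 1) :=
    mul_pos (mul_pos hA (by linarith)) hLe0
  set s : ℝ := Real.sqrt (A * Le * (Le - 1)) with hs_def
  have hs : 0 < s := Real.sqrt_pos.mpr hpos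
  have hsq : s ^ 2 = A * Le * (Le - 1) := Real.sq_sqrt hpos.le
  have ht : (Complex.I * (s : ℂ)) ^ 2 = -((A : ℂ) * Le * ((Le : ℂ) - 1)) := by
    have h1 : ((s : ℂ)) ^ 2 = ((A * Le * (Le - 1) : ℝ) : ℂ) := by
      rw [show ((s : ℂ)) ^ 2 = ((s ^ 2 : ℝ) : ℂ) by push_cast; ring, hsq]
    rw [mul_pow, Complex.I_sq, h1]
    push_cast; ring
  have hd : ((Le : ℂ) - 1) ≠ 0 := by
    intro h
    have h1 : (Le : ℂ) = 1 := by linear_combination h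
    have : Le = (1 : ℝ) := by exact_mod_cast h1
    linarith
  refine ⟨?_, ?_, ?_, ?_, ?_, ?_, ?_⟩
  · intro h
    rw [div_eq_div_iff hd hd] at h
    have h2 : Complex.I * (s : ℂ) = 0 := by
      have h3 : 2 * (Complex.I * (s : ℂ)) * ((Le : ℂ) - 1) = 0 := by linear_combination h
      rcases mul_eq_zero.mp h3 with h4 | h4
      · linear_combination h4 / 2
      · exact absurd h4 hd
    have : (s : ℂ) = 0 := by simpa [Complex.I_ne_zero] using mul_eq_zero.mp h2
    have : s = 0 := by exact_mod_cast this
    linarith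
  · intro l
    have key : ((Le : ℂ) - 1) ^ 2 * l ^ 2 + 2 * ((Le : ℂ) - 1) * Le * A * l +
        (Le : ℂ) * A * ((Le : ℂ) * A + Le - 1) =
        (((Le : ℂ) - 1) * l - (-(A * Le) + Complex.I * s)) *
          (((Le : ℂ) - 1) * l - (-(A * Le) - Complex.I * s)) := by
      linear_combination ht
    rw [key, mul_eq_zero, sub_eq_zero, sub_eq_zero]
    constructor
    · rintro (h | h)
      · left; rw [eq_div_iff hd]; linear_combination h
      · right; rw [eq_div_iff hd]; linear_combination h
    · rintro (h | h)
      · left; rw [eq_div_iff hd] at h; linear_combination h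
      · right; rw [eq_div_iff hd] at h; linear_combination h
  · have E1 : ((Le : ℂ) - 1) ^ 2 + 4 * ((Le : ℂ) - 1) * (-(A * Le) + Complex.I * s) =
        (((Le : ℂ) - 1) + 2 * (Complex.I * s)) ^ 2 := by
      linear_combination (-4 : ℂ) * ht
    have E2 : (Le : ℂ) ^ 2 * ((Le : ℂ) - 1) ^ 2 +
        4 * Le * ((Le : ℂ) - 1) * ((A : ℂ) * ((Le : ℂ) - 1) + (-(A * Le) + Complex.I * s)) =
        ((Le : ℂ) * ((Le : ℂ) - 1) + 2 * (Complex.I * s)) ^ 2 := by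
      linear_combination (-4 : ℂ) * ht
    have e1 : (1 : ℂ) + 4 * ((-(A * Le) + Complex.I * s) / ((Le : ℂ) - 1)) =
        (((((Le : ℂ) - 1) + 2 * (Complex.I * s))) / ((Le : ℂ) - 1)) ^ 2 := by
      rw [div_pow, ← E1]; field_simp
    have e2 : (Le : ℂ) ^ 2 + 4 * Le * ((A : ℂ) + (-(A * Le) + Complex.I * s) / ((Le : ℂ) - 1)) =
        ((((Le : ℂ) * ((Le : ℂ) - 1) + 2 * (Complex.I * s))) / ((Le : ℂ) - 1)) ^ 2 := by
      rw [div_pow, ← E2]; field_simp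
    have hre1 : (0 : ℝ) <
        (((((Le : ℂ) - 1) + 2 * (Complex.I * s))) / ((Le : ℂ) - 1)).re := by
      simp only [Complex.div_re, Complex.normSq_apply, Complex.add_re, Complex.add_im,
        Complex.sub_re, Complex.sub_im, Complex.mul_re, Complex.mul_im, Complex.I_re,
        Complex.I_im, Complex.ofReal_re, Complex.ofReal_im, Complex.one_re, Complex.one_im,
        Complex.re_ofNat, Complex.im_ofNat]
      norm_num
      exact div_pos (by nlinarith) (by nlinarith)
    have hre2 : (0 : ℝ) <
        (((((Le : ℂ) * ((Le : ℂ) - 1) + 2 * (Complex.I * s))) / ((Le : ℂ) - 1)).re) := by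
      simp only [Complex.div_re, Complex.normSq_apply, Complex.add_re, Complex.add_im,
        Complex.sub_re, Complex.sub_im, Complex.mul_re, Complex.mul_im, Complex.I_re,
        Complex.I_im, Complex.ofReal_re, Complex.ofReal_im, Complex.one_re, Complex.one_im,
        Complex.re_ofNat, Complex.im_ofNat]
      norm_num
      exact div_pos (by nlinarith) (by nlinarith)
    rw [e1, e2, csqrt_sq hre1, csqrt_sq hre2]
    field_simp
    ring
  · have E1 : ((Le : ℂ) - 1) ^ 2 + 4 * ((Le : ℂ) - 1) * (-(A * Le) - Complex.I * s) =
        (((Le : ℂ) - 1) - 2 * (Complex.I * s)) ^ 2 := by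
      linear_combination (-4 : ℂ) * ht
    have E2 : (Le : ℂ) ^ 2 * ((Le : ℂ) - 1) ^ 2 +
        4 * Le * ((Le : ℂ) - 1) * ((A : ℂ) * ((Le : ℂ) - 1) + (-(A * Le) - Complex.I * s)) =
        ((Le : ℂ) * ((Le : ℂ) - 1) - 2 * (Complex.I * s)) ^ 2 := by
      linear_combination (-4 : ℂ) * ht
    have e1 : (1 : ℂ) + 4 * ((-(A * Le) - Complex.I * s) / ((Le : ℂ) - 1)) =
        (((((Le : ℂ) - 1) - 2 * (Complex.I * s))) / ((Le : ℂ) - 1)) ^ 2 := by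
      rw [div_pow, ← E1]; field_simp
    have e2 : (Le : ℂ) ^ 2 + 4 * Le * ((A : ℂ) + (-(A * Le) - Complex.I * s) / ((Le : ℂ) - 1)) =
        ((((Le : ℂ) * ((Le : ℂ) - 1) - 2 * (Complex.I * s))) / ((Le : ℂ) - 1)) ^ 2 := by
      rw [div_pow, ← E2]; field_simp
    have hre1 : (0 : ℝ) <
        (((((Le : ℂ) - 1) - 2 * (Complex.I * s))) / ((Le : ℂ) - 1)).re := by
      simp only [Complex.div_re, Complex.normSq_apply, Complex.add_re, Complex.add_im,
        Complex.sub_re, Complex.sub_im, Complex.mul_re, Complex.mul_im, Complex.I_re,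
        Complex.I_im, Complex.ofReal_re, Complex.ofReal_im, Complex.one_re, Complex.one_im,
        Complex.re_ofNat, Complex.im_ofNat]
      norm_num
      exact div_pos (by nlinarith) (by nlinarith)
    have hre2 : (0 : ℝ) <
        (((((Le : ℂ) * ((Le : ℂ) - 1) - 2 * (Complex.I * s))) / ((Le : ℂ) - 1)).re) := by
      simp only [Complex.div_re, Complex.normSq_apply, Complex.add_re, Complex.add_im,
        Complex.sub_re, Complex.sub_im, Complex.mul_re, Complex.mul_im, Complex.I_re,
        Complex.I_im, Complex.ofReal_re, Complex.ofReal_im, Complex.one_re, Complex.one_im,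
        Complex.re_ofNat, Complex.im_ofNat]
      norm_num
      exact div_pos (by nlinarith) (by nlinarith)
    rw [e1, e2, csqrt_sq hre1, csqrt_sq hre2]
    field_simp
    ring
  · simp only [Complex.div_re, Complex.normSq_apply, Complex.add_re, Complex.add_im,
      Complex.sub_re, Complex.sub_im, Complex.mul_re, Complex.mul_im, Complex.I_re,
      Complex.I_im, Complex.ofReal_re, Complex.ofReal_im, Complex.one_re, Complex.one_im,
      Complex.neg_re, Complex.neg_im, Complex.re_ofNat, Complex.im_ofNat]
    norm_num
    rw [div_eq_div_iff (by nlinarith) (ne_of_gt (by linarith : (0:ℝ) < Le - 1))]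
    ring
  · simp only [Complex.div_re, Complex.normSq_apply, Complex.add_re, Complex.add_im,
      Complex.sub_re, Complex.sub_im, Complex.mul_re, Complex.mul_im, Complex.I_re,
      Complex.I_im, Complex.ofReal_re, Complex.ofReal_im, Complex.one_re, Complex.one_im,
      Complex.neg_re, Complex.neg_im, Complex.re_ofNat, Complex.im_ofNat]
    norm_num
    rw [div_eq_div_iff (by nlinarith) (ne_of_gt (by linarith : (0:ℝ) < Le - 1))]
    ring
  · apply div_neg_of_neg_of_pos <;> nlinarith
end

section
/- Let Le>1 and A>0, and set λ* = (−A·Le + i√(A·Le(Le−1)))/(Le−1). With a = (1−1/Le)², b = 1/Le and c = (2A+1)/2 + (8A−5)/(4Le) + (1+A)/Le² − 1/(4Le³), one has a·Re λ* + b·(Im λ*)² + c > 0; that is, λ* (and its complex conjugate) does not belong to the parabolic region 𝒫 = {λ∈ℂ : a·Re λ + b·(Im λ)² + c ≤ 0}. -/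
open Complex

/-- the point λ* = (−A·Le + i√(A·Le(Le−1)))/(Le−1) (and hence its
conjugate) lies outside the parabolic region
𝒫 = {λ : a·Re λ + b·(Im λ)² + c ≤ 0}. -/
theorem lambda_star_not_in_parabola (Le A : ℝ) (hLe : 1 < Le) (hA : 0 < A) :
    (fun (lstar : ℂ) (a b c : ℝ) =>
      a * lstar.re + b * lstar.im ^ 2 + c > 0)
    ((-(A * Le) + Complex.I * Real.sqrt (A * Le * (Le - 1))) / ((Le : ℂ) - 1))
    ((1 - 1 / Le) ^ 2)
    (1 / Le)
    ((2 * A + 1) / 2 + (8 * A - 5) / (4 * Le) + (1 + A) / Le ^ 2 - 1 / (4 * Le ^ 3)) := by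
  simp only
  have hL1 : (0:ℝ) < Le - 1 := by linarith
  have hL0 : (0:ℝ) < Le := by linarith
  set s : ℝ := Real.sqrt (A * Le * (Le - 1)) with hsdef
  have hs2 : s ^ 2 = A * Le * (Le - 1) := Real.sq_sqrt (by positivity)
  have hne : ((Le : ℂ) - 1) ≠ 0 := by
    simpa using sub_ne_zero.mpr (by exact_mod_cast (by linarith : (Le:ℝ) ≠ 1))
  have hre : ((-(A * Le) + Complex.I * s) / ((Le : ℂ) - 1)).re = -(A * Le) / (Le - 1) := by
    rw [show ((Le:ℂ) - 1) = ((Le - 1 : ℝ) : ℂ) by push_cast; ring, Complex.div_ofReal_re]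
    simp
  have him : ((-(A * Le) + Complex.I * s) / ((Le : ℂ) - 1)).im = s / (Le - 1) := by
    rw [show ((Le:ℂ) - 1) = ((Le - 1 : ℝ) : ℂ) by push_cast; ring, Complex.div_ofReal_im]
    simp
  rw [hre, him, div_pow, hs2]
  rw [show A * Le * (Le - 1) / (Le - 1) ^ 2 = A * Le / (Le - 1) by
    rw [sq]; exact mul_div_mul_right _ _ hL1.ne']
  have key : 0 < 2*Le^4 + (16*A-7)*Le^3 + (9-8*A)*Le^2 - (4*A+5)*Le + 1 := by
    have h1 : (0:ℝ) < 4*Le^2 - 2*Le - 1 := by nlinarith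
    have h2 : (0:ℝ) < 2*Le - 1 := by linarith
    have e : 2*Le^4 + (16*A-7)*Le^3 + (9-8*A)*Le^2 - (4*A+5)*Le + 1
        = 4*A*Le*(4*Le^2 - 2*Le - 1) + (Le-1)^3*(2*Le-1) := by ring
    rw [e]
    exact add_pos (mul_pos (by positivity : (0:ℝ) < 4*A*Le) h1) (mul_pos (by positivity : (0:ℝ) < (Le-1)^3) h2)
  rw [gt_iff_lt, ← sub_pos]
  have h4 : (0:ℝ) < 4 * Le^3 * (Le-1) := by positivity
  rw [show ((1 - 1 / Le) ^ 2 * (-(A * Le) / (Le - 1)) + 1 / Le * (A * Le / (Le - 1)) +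
      ((2 * A + 1) / 2 + (8 * A - 5) / (4 * Le) + (1 + A) / Le ^ 2 - 1 / (4 * Le ^ 3)) - 0)
      = (2*Le^4 + (16*A-7)*Le^3 + (9-8*A)*Le^2 - (4*A+5)*Le + 1) / (4 * Le^3 * (Le-1)) by
      field_simp [hL0.ne', hL1.ne']; ring]
  exact div_pos key h4
end

section
/- Let Le>1 and A>0. There is no λ∈ℂ such that √(1+4λ) + √(Le²+4Le(A+λ)) = Le−1, where √· denotes the principal branch of the complex square root. Equivalently, k₂(λ) ≠ k₃(λ) for every λ∈ℂ. -/
open Complex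

lemma csqrt_sq_s7 (z : ℂ) : csqrt z ^ 2 = z := by
  unfold csqrt
  rw [show (1/2 : ℂ) = ((2:ℕ):ℂ)⁻¹ by norm_num]
  exact Complex.cpow_nat_inv_pow z two_ne_zero

lemma csqrt_re_nonneg (z : ℂ) : 0 ≤ (csqrt z).re := by
  unfold csqrt
  rcases eq_or_ne z 0 with rfl | hz
  · simp [Complex.zero_cpow (by norm_num : (1/2:ℂ) ≠ 0)]
  · rw [Complex.cpow_def_of_ne_zero hz, Complex.exp_re]
    apply mul_nonneg (Real.exp_nonneg _)
    have him : (Complex.log z * (1/2)).im = z.arg / 2 := by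
      simp [Complex.mul_im, Complex.log_im]
      ring
    rw [him]
    apply Real.cos_nonneg_of_mem_Icc
    constructor
    · have := Complex.neg_pi_lt_arg z
      linarith [Real.pi_pos]
    · have := Complex.arg_le_pi z
      linarith [Real.pi_pos]

/-- for Le>1, A>0 there is no λ∈ℂ with
√(1+4λ) + √(Le²+4Le(A+λ)) = Le−1, i.e. k₂(λ) ≠ k₃(λ) for all λ. -/
theorem no_solution_k2_eq_k3 (Le A : ℝ) (hLe : 1 < Le) (hA : 0 < A) :
    ¬ ∃ l : ℂ,
      csqrt (1 + 4 * l) + csqrt ((Le : ℂ) ^ 2 + 4 * Le * ((A : ℂ) + l)) =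
        (Le : ℂ) - 1 := by
  rintro ⟨l, hl⟩
  set a := csqrt (1 + 4 * l) with ha_def
  set b := csqrt ((Le : ℂ) ^ 2 + 4 * Le * ((A : ℂ) + l)) with hb_def
  have ha2 : a ^ 2 = 1 + 4 * l := csqrt_sq_s7 _
  have hb2 : b ^ 2 = (Le : ℂ) ^ 2 + 4 * Le * ((A : ℂ) + l) := csqrt_sq_s7 _
  have hx : 0 ≤ a.re := csqrt_re_nonneg _
  have hu : 0 ≤ b.re := csqrt_re_nonneg _
  have hE : b ^ 2 - (Le : ℂ) * a ^ 2 = (Le : ℂ) ^ 2 + 4 * Le * A - Le := by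
    rw [ha2, hb2]; ring
  -- take components
  have hsum_re : a.re + b.re = Le - 1 := by
    have := congrArg Complex.re hl
    simpa using this
  have hsum_im : a.im + b.im = 0 := by
    have := congrArg Complex.im hl
    simpa using this
  have hEre : (b.re ^ 2 - b.im ^ 2) - Le * (a.re ^ 2 - a.im ^ 2)
      = Le ^ 2 + 4 * Le * A - Le := by
    have := congrArg Complex.re hE
    simpa [pow_two, Complex.mul_re, Complex.mul_im, Complex.sub_re] using this
  have hEim : 2 * b.re * b.im - Le * (2 * a.re * a.im) = 0 := by
    have := congrArg Complex.im hE
    simp [pow_two, Complex.mul_re, Complex.mul_im, Complex.sub_im] at this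
    nlinarith [this]
  -- imaginary parts vanish
  have hbim : b.im = - a.im := by linarith
  have hfac : a.im * (b.re + Le * a.re) = 0 := by
    rw [hbim] at hEim; nlinarith [hEim]
  have hpos : 0 < b.re + Le * a.re := by nlinarith
  have haim : a.im = 0 := by
    rcases mul_eq_zero.1 hfac with h | h
    · exact h
    · exact absurd h (ne_of_gt hpos)
  rw [haim] at hbim hEre
  rw [hbim] at hEre
  -- now real contradiction
  nlinarith [sq_nonneg a.re, sq_nonneg b.re, hEre, hsum_re, hx, hu, hA, hLe,
    mul_pos (by linarith : (0:ℝ) < Le) hA]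
end

section
/- The polynomial q(θ) = 1920θ⁶ − 11600θ⁵ + 19164θ⁴ − 12038θ³ + 2174θ² + 251θ + 8 is strictly positive for every θ ∈ (0,1/2) and strictly negative for every θ ∈ ((4+√22)/12, 1). -/
/-- the polynomial
q(θ) = 1920θ⁶ − 11600θ⁵ + 19164θ⁴ − 12038θ³ + 2174θ² + 251θ + 8
is strictly positive on (0,1/2) and strictly negative on ((4+√22)/12, 1). -/
theorem q_sign (θ : ℝ) :
    (0 < θ → θ < 1 / 2 →
      0 < 1920 * θ ^ 6 - 11600 * θ ^ 5 + 19164 * θ ^ 4 - 12038 * θ ^ 3 +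
        2174 * θ ^ 2 + 251 * θ + 8) ∧
    ((4 + Real.sqrt 22) / 12 < θ → θ < 1 →
      1920 * θ ^ 6 - 11600 * θ ^ 5 + 19164 * θ ^ 4 - 12038 * θ ^ 3 +
        2174 * θ ^ 2 + 251 * θ + 8 < 0) := by
  constructor
  · intro h0 h1
    have hb : (0:ℝ) < 1 - 2 * θ := by linarith
    nlinarith [mul_pos (pow_pos h0 6) (pow_pos hb 0),
      mul_pos (pow_pos h0 5) (pow_pos hb 1),
      mul_pos (pow_pos h0 4) (pow_pos hb 2),
      mul_pos (pow_pos h0 3) (pow_pos hb 3),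
      mul_pos (pow_pos h0 2) (pow_pos hb 4),
      mul_pos (pow_pos h0 1) (pow_pos hb 5),
      pow_pos hb 6]
  · intro h0 h1
    have hs : (4.4:ℝ) < Real.sqrt 22 := by
      nlinarith [Real.sq_sqrt (by norm_num : (22:ℝ) ≥ 0), Real.sqrt_nonneg 22]
    have ha : (0:ℝ) < θ - 7/10 := by
      have := h0
      nlinarith
    have hc : (0:ℝ) < 1 - θ := by linarith
    nlinarith [mul_pos (pow_pos ha 6) (pow_pos hc 0),
      mul_pos (pow_pos ha 5) (pow_pos hc 1),
      mul_pos (pow_pos ha 4) (pow_pos hc 2),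
      mul_pos (pow_pos ha 3) (pow_pos hc 3),
      mul_pos (pow_pos ha 2) (pow_pos hc 4),
      mul_pos (pow_pos ha 1) (pow_pos hc 5),
      pow_pos hc 6]
end

section
/- For every m ∈ (2,8), the complex numbers λ₁(m) = (m²−6m)/8 + i·(m−2)√(8m−m²)/8 and its complex conjugate λ₂(m) = (m²−6m)/8 − i·(m−2)√(8m−m²)/8 are roots of the limit dispersion relation: D₀(λ₁(m);m)=0 and D₀(λ₂(m);m)=0. -/
open Complex

lemma csqrt_eq (z w : ℂ) (hw : w ^ 2 = z) (hre : 0 < w.re) : csqrt z = w := by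
  have hz : z ≠ 0 := by
    rw [← hw]
    intro h
    rw [pow_eq_zero_iff (by norm_num)] at h
    rw [h] at hre; simp at hre
  have hsq : (csqrt z) ^ 2 = z := by
    have := Complex.cpow_nat_inv_pow z (by norm_num : (2:ℕ) ≠ 0)
    unfold csqrt
    rw [show ((1:ℂ)/2) = ((2:ℕ):ℂ)⁻¹ by norm_num]
    exact this
  have h : (csqrt z - w) * (csqrt z + w) = 0 := by ring_nf; rw [hsq, ← hw]; ring
  rcases mul_eq_zero.mp h with h' | h'
  · exact sub_eq_zero.mp h'
  · exfalso
    have : csqrt z = -w := eq_neg_of_add_eq_zero_left h'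
    have h2 := csqrt_re_nonneg z
    rw [this] at h2
    simp at h2
    linarith

/-- The limit dispersion relation D₀(λ;m). -/
noncomputable def dispersion0 (m : ℝ) (l : ℂ) : ℂ :=
  -(1/2) * (2 * ((m : ℂ) + l) + 1 + csqrt (1 + 4 * l)) *
    (1 - csqrt (1 + 4 * l) / (1 + (m : ℂ))) + (m : ℂ)

/-- for m ∈ (2,8), λ₁(m) = (m²−6m)/8 + i(m−2)√(8m−m²)/8 and its
conjugate are roots of the limit dispersion relation. -/
theorem limit_dispersion_roots (m : ℝ) (hm2 : 2 < m) (hm8 : m < 8) :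
    dispersion0 m (((m ^ 2 - 6 * m) / 8 : ℝ) +
      Complex.I * ((m - 2) * Real.sqrt (8 * m - m ^ 2) / 8 : ℝ)) = 0 ∧
    dispersion0 m (((m ^ 2 - 6 * m) / 8 : ℝ) -
      Complex.I * ((m - 2) * Real.sqrt (8 * m - m ^ 2) / 8 : ℝ)) = 0 := by
  set r : ℝ := Real.sqrt (8 * m - m ^ 2) with hrdef
  have hr : r ^ 2 = 8 * m - m ^ 2 := Real.sq_sqrt (by nlinarith)
  have hrC : (r : ℂ) ^ 2 = 8 * (m : ℂ) - (m : ℂ) ^ 2 := by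
    exact_mod_cast congrArg (Complex.ofReal ·) hr
  have hm1 : (1 : ℂ) + (m : ℂ) ≠ 0 := by
    intro h
    have h2 := congrArg Complex.re h
    simp at h2; linarith
  constructor
  · have hs : csqrt (1 + 4 * ((((m ^ 2 - 6 * m) / 8 : ℝ) : ℂ) +
        Complex.I * (((m - 2) * r / 8 : ℝ) : ℂ))) =
        ((m : ℂ) - 2) / 2 + Complex.I * (r : ℂ) / 2 := by
      apply csqrt_eq
      · push_cast
        have hI : Complex.I ^ 2 = -1 := Complex.I_sq
        linear_combination ((r:ℂ)^2/4) * hI + (-(1:ℂ)/4) * hrC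
      · simp [Complex.add_re, Complex.div_re]
        linarith
    unfold dispersion0
    push_cast
    push_cast at hs
    rw [hs]
    field_simp
    ring_nf
    linear_combination (4*(m:ℂ)*(r:ℂ)^2) * Complex.I_sq +
      (-4*(m:ℂ)) * hrC
  · have hs : csqrt (1 + 4 * ((((m ^ 2 - 6 * m) / 8 : ℝ) : ℂ) -
        Complex.I * (((m - 2) * r / 8 : ℝ) : ℂ))) =
        ((m : ℂ) - 2) / 2 - Complex.I * (r : ℂ) / 2 := by
      apply csqrt_eq
      · push_cast
        have hI : Complex.I ^ 2 = -1 := Complex.I_sq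
        linear_combination ((r:ℂ)^2/4) * hI + (-(1:ℂ)/4) * hrC
      · simp [Complex.sub_re, Complex.div_re]
        linarith
    unfold dispersion0
    push_cast
    push_cast at hs
    rw [hs]
    field_simp
    ring_nf
    linear_combination (4*(m:ℂ)*(r:ℂ)^2) * Complex.I_sq +
      (-4*(m:ℂ)) * hrC
end

section
/- Let m > 2 and let λ ∈ ℂ be any root of the quadratic 4λ² + (6m−m²)λ + 2m = 0. Then Re λ ≥ −(m+2)/4. Moreover: if 2 < m < 6 then Re λ < 0; if m = 6 then the roots are exactly ±√3·i; and if m > 6 then Re λ > 0. -/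
open Complex

/-- for m > 2, any complex root λ of 4λ² + (6m−m²)λ + 2m = 0
satisfies Re λ ≥ −(m+2)/4; if m < 6 then Re λ < 0; if m = 6 the roots are
exactly ±√3·i (any root is one of them, and both are indeed roots); if m > 6
then Re λ > 0. -/
theorem quadratic_roots_real_part (m : ℝ) (hm : 2 < m) (l : ℂ)
    (hroot : 4 * l ^ 2 + ((6 * m - m ^ 2 : ℝ) : ℂ) * l + ((2 * m : ℝ) : ℂ) = 0) :
    -(m + 2) / 4 ≤ l.re ∧
    (m < 6 → l.re < 0) ∧
    (m = 6 →
      (l = Real.sqrt 3 * Complex.I ∨ l = -(Real.sqrt 3 * Complex.I)) ∧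
      (∀ w : ℂ, w = Real.sqrt 3 * Complex.I ∨ w = -(Real.sqrt 3 * Complex.I) →
        4 * w ^ 2 + ((6 * m - m ^ 2 : ℝ) : ℂ) * w + ((2 * m : ℝ) : ℂ) = 0)) ∧
    (6 < m → 0 < l.re) := by
  set x := l.re with hx
  set y := l.im with hy
  have hre : 4 * (x ^ 2 - y ^ 2) + (6 * m - m ^ 2) * x + 2 * m = 0 := by
    have := congrArg Complex.re hroot
    simp [Complex.ext_iff, pow_two, Complex.mul_re, Complex.mul_im] at this
    ring_nf at this
    linear_combination this
  have him : y * (8 * x + (6 * m - m ^ 2)) = 0 := by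
    have := congrArg Complex.im hroot
    simp [Complex.ext_iff, pow_two, Complex.mul_re, Complex.mul_im] at this
    ring_nf at this
    linear_combination this
  have hsq3 : (Real.sqrt 3 : ℝ) ^ 2 = 3 := Real.sq_sqrt (by norm_num)
  have key : (-(m + 2) / 4 ≤ x) ∧ (m < 6 → x < 0) ∧ (6 < m → 0 < x) := by
    rcases mul_eq_zero.1 him with hy0 | hx0
    · -- real root
      rw [hy0] at hre
      refine ⟨?_, ?_, ?_⟩
      · nlinarith [sq_nonneg (m - 2), sq_nonneg (x + (m + 2) / 4),
          mul_nonneg (sq_nonneg (m - 2)) (sq_nonneg (x + (m + 2) / 4))]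
      · intro h6
        by_contra h
        push_neg at h
        nlinarith [mul_nonneg (mul_nonneg (le_of_lt (by linarith : (0:ℝ) < m)) (by linarith : (0:ℝ) ≤ 6 - m)) h]
      · intro h6
        by_contra h
        push_neg at h
        nlinarith [mul_nonneg (mul_nonneg (le_of_lt (by linarith : (0:ℝ) < m)) (by linarith : (0:ℝ) ≤ m - 6)) (neg_nonneg.2 h)]
    · have hxval : x = (m ^ 2 - 6 * m) / 8 := by linarith
      refine ⟨?_, ?_, ?_⟩
      · rw [hxval]; nlinarith [sq_nonneg (m - 2)]
      · intro h6; rw [hxval]; nlinarith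
      · intro h6; rw [hxval]; nlinarith
  refine ⟨key.1, key.2.1, ?_, key.2.2⟩
  intro hm6
  subst hm6
  constructor
  · -- l² = -3
    have hl2 : l ^ 2 = -3 := by
      have : (4 : ℂ) * l ^ 2 + 12 = 0 := by
        convert hroot using 2 <;> norm_num
      have h4 : (4 : ℂ) ≠ 0 := by norm_num
      field_simp at this
      linear_combination this / 4
    have hfac : (l - Real.sqrt 3 * Complex.I) * (l + Real.sqrt 3 * Complex.I) = 0 := by
      have h3 : ((Real.sqrt 3 : ℝ) : ℂ) ^ 2 = 3 := by
        rw [← Complex.ofReal_pow, hsq3]; norm_num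
      calc (l - Real.sqrt 3 * Complex.I) * (l + Real.sqrt 3 * Complex.I)
          = l ^ 2 - ((Real.sqrt 3 : ℝ) : ℂ) ^ 2 * Complex.I ^ 2 := by ring
        _ = 0 := by rw [hl2, h3, Complex.I_sq]; ring
    rcases mul_eq_zero.1 hfac with h | h
    · left; linear_combination h
    · right; linear_combination h
  · intro w hw
    have h3 : ((Real.sqrt 3 : ℝ) : ℂ) ^ 2 = 3 := by
      rw [← Complex.ofReal_pow, hsq3]; norm_num
    rcases hw with h | h <;> subst h <;>
    · push_cast
      linear_combination 4 * ((Real.sqrt 3 : ℂ)) ^ 2 * Complex.I_sq - 4 * h3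
end

section
/- The map λ ↦ D₀(λ;6) is complex differentiable at λ = √3·i with derivative (−3 + 5√3·i)/49; the map m ↦ D₀(√3·i;m) is differentiable at m = 6 with derivative (1 − √3·i)/14; and the transversality ratio satisfies −[(1−√3·i)/14] / [(−3+5√3·i)/49] = 3/4 + (√3/12)·i, whose real part is positive. -/
open Complex

lemma csqrt_val {x : ℂ} (hx : x ^ 2 = -3) (hre : x.re = 0) :
    csqrt (1 + 4 * x) = 2 + x := by
  have h : (1 : ℂ) + 4 * x = (2 + x) ^ (2:ℕ) := by linear_combination -hx
  have hpos : 0 < (2 + x).re := by simp [hre]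
  rw [h, csqrt]
  have h12 : (1/2 : ℂ) = (2⁻¹ : ℂ) := by norm_num
  rw [h12]
  exact sq_cpow_two_inv hpos

lemma csqrt_deriv {x : ℂ} (hx : x ^ 2 = -3) (hre : x.re = 0) (him : x.im ≠ 0) :
    HasDerivAt (fun l : ℂ => csqrt (1 + 4 * l)) (2 / (2 + x)) x := by
  have hne : (2 : ℂ) + x ≠ 0 := by
    intro h; apply him
    have := congrArg Complex.im h; simpa using this
  have hslit : (1 : ℂ) + 4 * x ∈ slitPlane := by
    refine Or.inr ?_; simpa using him
  have hf : HasDerivAt (fun l : ℂ => 1 + 4 * l) 4 x := by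
    simpa using ((hasDerivAt_id x).const_mul (4:ℂ)).const_add 1
  have h := hf.cpow_const (c := (1/2 : ℂ)) hslit
  have hval : ((1:ℂ) + 4 * x) ^ (1/2 - 1 : ℂ) = (2 + x)⁻¹ := by
    have h2 : (1/2 - 1 : ℂ) = -(1/2) := by norm_num
    rw [h2, cpow_neg]
    congr 1
    exact csqrt_val hx hre
  rw [hval] at h
  have hd : (1/2 : ℂ) * (2 + x)⁻¹ * 4 = 2 / (2 + x) := by field_simp; ring
  simp only [csqrt]
  rw [← hd]
  exact h

/-- transversality data at (λ,m) = (√3·i, 6):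
∂D₀/∂λ(√3·i;6) = (−3+5√3·i)/49, ∂D₀/∂m(√3·i;6) = (1−√3·i)/14, and
−(∂D₀/∂m)/(∂D₀/∂λ) = 3/4 + (√3/12)·i, which has positive real part. -/
theorem transversality_at_critical_point :
    HasDerivAt (fun l : ℂ => dispersion0 6 l)
      ((-3 + 5 * (Real.sqrt 3 : ℂ) * Complex.I) / 49)
      ((Real.sqrt 3 : ℂ) * Complex.I) ∧
    HasDerivAt (fun m : ℝ => dispersion0 m ((Real.sqrt 3 : ℂ) * Complex.I))
      ((1 - (Real.sqrt 3 : ℂ) * Complex.I) / 14) 6 ∧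
    -((1 - (Real.sqrt 3 : ℂ) * Complex.I) / 14) /
        ((-3 + 5 * (Real.sqrt 3 : ℂ) * Complex.I) / 49) =
      3 / 4 + ((Real.sqrt 3 / 12 : ℝ) : ℂ) * Complex.I ∧
    (0:ℝ) < (3 / 4 + ((Real.sqrt 3 / 12 : ℝ) : ℂ) * Complex.I).re := by
  set x : ℂ := (Real.sqrt 3 : ℂ) * Complex.I with hxdef
  have hs3 : (Real.sqrt 3 : ℝ) ^ 2 = 3 := Real.sq_sqrt (by norm_num)
  have hs3c : ((Real.sqrt 3 : ℝ) : ℂ) ^ 2 = 3 := by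
    rw [← Complex.ofReal_pow, hs3]; norm_num
  have hI : Complex.I ^ 2 = -1 := Complex.I_sq
  have hx : x ^ 2 = -3 := by
    rw [hxdef, mul_pow, Complex.I_sq, hs3c]; ring
  have hre : x.re = 0 := by simp [hxdef]
  have hs3pos : (0:ℝ) < Real.sqrt 3 := Real.sqrt_pos.2 (by norm_num)
  have him : x.im ≠ 0 := by
    simpa [hxdef] using hs3pos.ne'
  have hne : (2 : ℂ) + x ≠ 0 := by
    intro h; apply him
    have := congrArg Complex.im h; simpa using this
  have hcv : csqrt (1 + 4 * x) = 2 + x := csqrt_val hx hre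
  have hS := csqrt_deriv hx hre him
  -- λ derivative
  have part1 : HasDerivAt (fun l : ℂ => dispersion0 6 l) ((-3 + 5 * x) / 49) x := by
    have hA : HasDerivAt (fun l : ℂ => 2 * (((6:ℝ):ℂ) + l) + 1) 2 x := by
      simpa using (((hasDerivAt_id x).const_add (((6:ℝ)):ℂ)).const_mul 2).add_const 1
    have h1 := hA.add hS
    have h2 : HasDerivAt (fun l : ℂ => 1 - csqrt (1 + 4 * l) / (1 + ((6:ℝ):ℂ)))
        (-(2 / (2 + x) / (1 + ((6:ℝ):ℂ)))) x := by
      simpa using ((hS.div_const (1 + ((6:ℝ):ℂ))).const_sub 1)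
    have h3 := ((h1.mul h2).const_mul (-(1/2) : ℂ)).add_const ((6:ℝ):ℂ)
    have hfun : (fun l : ℂ => dispersion0 6 l) =
        fun l : ℂ => -(1/2) * ((2 * (((6:ℝ):ℂ) + l) + 1 + csqrt (1 + 4 * l)) *
          (1 - csqrt (1 + 4 * l) / (1 + ((6:ℝ):ℂ)))) + ((6:ℝ):ℂ) := by
      funext l
      simp [dispersion0, mul_assoc]
    rw [hfun]
    convert h3 using 1
    · rfl
    · rfl
    · rfl
    simp only [Pi.add_apply]
    rw [hcv]
    push_cast
    clear_value x
    field_simp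
    linear_combination (-14:ℂ) * hx
  -- m derivative
  have part2 : HasDerivAt (fun m : ℝ => dispersion0 m x) ((1 - x) / 14) 6 := by
    have hA : HasDerivAt (fun w : ℂ => 2 * (w + x) + 1 + (2 + x)) 2 6 := by
      simpa using ((((hasDerivAt_id (6:ℂ)).add_const x).const_mul 2).add_const 1).add_const (2 + x)
    have h7 : (1 : ℂ) + 6 ≠ 0 := by norm_num
    have hB : HasDerivAt (fun w : ℂ => 1 - (2 + x) / (1 + w))
        (-((0 * (1 + 6) - (2 + x) * 1) / ((1:ℂ) + 6) ^ 2)) 6 := by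
      exact (((hasDerivAt_const (6:ℂ) (2+x)).div ((hasDerivAt_id (6:ℂ)).const_add 1) h7).const_sub 1)
    have h3 := (((hA.mul hB).const_mul (-(1/2) : ℂ)).add (hasDerivAt_id (6:ℂ)))
    have h4 := h3.comp_ofReal
    have hfun : (fun m : ℝ => dispersion0 m x) =
        fun m : ℝ => -(1/2) * ((2 * ((m:ℂ) + x) + 1 + (2 + x)) *
          (1 - (2 + x) / (1 + (m:ℂ)))) + (m:ℂ) := by
      funext m
      simp [dispersion0, hcv, mul_assoc]
    rw [hfun]
    convert h4 using 1
    · rfl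
    swap
    · norm_num
    push_cast
    clear_value x
    field_simp
    linear_combination (42:ℂ) * hx
  have e1 : ((-3 + 5 * (Real.sqrt 3 : ℂ) * Complex.I) / 49) = (-3 + 5 * x) / 49 := by
    rw [hxdef]; ring
  refine ⟨by rw [e1]; exact part1, part2, ?_, ?_⟩
  · have hden : (-3 + 5 * x) ≠ 0 := by
      intro h
      have := congrArg Complex.re h
      simp [hre] at this
    push_cast
    rw [show ((Real.sqrt 3 : ℂ) / 12) * Complex.I = x / 12 by rw [hxdef]; ring]
    rw [show (-3 + 5 * (Real.sqrt 3:ℂ) * Complex.I) = -3 + 5 * x by rw [hxdef]; ring]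
    rw [show (1 - (Real.sqrt 3:ℂ) * Complex.I) = 1 - x by rw [hxdef]]
    clear_value x
    rw [div_eq_iff (div_ne_zero hden (by norm_num))]
    linear_combination (-5/588:ℂ) * hx
  · norm_num
end
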